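/- The second deformed Bessel function 𝒥_n^μ(x) = ((x/2)^n/(Γ(1/2)Γ(n+1/2))) ∫_{−1}^{1} E_μ(isx)(1−s²)^{n−1/2} ds has Taylor expansion 𝒥_n^μ(x) = Σ_{k≥0} (−1)^k (2k)!/(k!(k+n)! [2k]_μ!) (x/2)^{2k+n}. -/

import Mathlib

/-- The deformed integer `[n]_μ = n + μ (1 - (-1)^n)`. -/
noncomputable def dIdx (μ : ℝ) (n : ℕ) : ℝ := n + μ * (1 - (-1 : ℝ) ^ n)

/-- The deformed factorial `[n]_μ!`. -/
noncomputable def dFact (μ : ℝ) : ℕ → ℝ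
  | 0 => 1
  | n + 1 => dIdx μ (n + 1) * dFact μ n

/-- The deformed exponential `E_μ(z) = Σ_{m≥0} z^m / [m]_μ!`. -/
noncomputable def EmuC (μ : ℝ) (z : ℂ) : ℂ := ∑' m : ℕ, z ^ m / (dFact μ m : ℂ)


open MeasureTheory intervalIntegral Set

lemma le_dIdx {μ : ℝ} (hμ : 0 ≤ μ) (n : ℕ) : (n : ℝ) ≤ dIdx μ n := by
  have h1 : (-1 : ℝ) ^ n ≤ 1 := by
    rcases Nat.even_or_odd n with h | h
    · rw [h.neg_one_pow]
    · rw [h.neg_one_pow]; norm_num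
  have := mul_nonneg hμ (by linarith : (0:ℝ) ≤ 1 - (-1:ℝ)^n)
  unfold dIdx; linarith

lemma factorial_le_dFact {μ : ℝ} (hμ : 0 ≤ μ) (n : ℕ) : ((Nat.factorial n) : ℝ) ≤ dFact μ n := by
  induction n with
  | zero => simp [dFact]
  | succ n ih =>
    have h1 : ((n:ℝ) + 1) ≤ dIdx μ (n + 1) := by exact_mod_cast le_dIdx hμ (n+1)
    have h2 : (0:ℝ) < ((Nat.factorial n) : ℝ) := by exact_mod_cast Nat.factorial_pos n
    calc ((Nat.factorial (n+1)) : ℝ) = ((n:ℝ)+1) * ((Nat.factorial n) : ℝ) := by push_cast [Nat.factorial_succ]; ring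
    _ ≤ dIdx μ (n+1) * dFact μ n := by
        apply mul_le_mul h1 ih h2.le (by linarith)
    _ = dFact μ (n+1) := rfl

lemma dFact_pos {μ : ℝ} (hμ : 0 ≤ μ) (n : ℕ) : 0 < dFact μ n :=
  lt_of_lt_of_le (by exact_mod_cast Nat.factorial_pos n) (factorial_le_dFact hμ n)

lemma Gamma_nat_add_half (k : ℕ) :
    Real.Gamma ((k : ℝ) + 1/2) = (Nat.factorial (2*k)) / (4^k * (Nat.factorial k)) * Real.Gamma (1/2) := by
  induction k with
  | zero => simp
  | succ k ih =>
    have h : ((k:ℝ) + 1) + 1/2 = ((k:ℝ) + 1/2) + 1 := by ring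
    push_cast
    rw [h, Real.Gamma_add_one (by positivity), ih]
    have e2 : ((Nat.factorial (2*(k+1))) : ℝ) = (2*(k:ℝ)+2) * (2*(k:ℝ)+1) * (Nat.factorial (2*k)) := by
      have : 2*(k+1) = (2*k+1)+1 := by ring
      rw [this, Nat.factorial_succ, Nat.factorial_succ]; push_cast; ring
    have e3 : ((Nat.factorial (k+1)) : ℝ) = ((k:ℝ)+1) * (Nat.factorial k) := by
      rw [Nat.factorial_succ]; push_cast; ring
    rw [e2, e3]
    have h4 : (0:ℝ) < 4 ^ k := by positivity
    have hk : (0:ℝ) < ((Nat.factorial k) : ℝ) := by exact_mod_cast Nat.factorial_pos k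
    field_simp
    ring


open MeasureTheory intervalIntegral Set

lemma realBeta {a b : ℝ} (ha : 0 < a) (hb : 0 < b) :
    ∫ t in (0:ℝ)..1, t ^ (a-1) * (1-t) ^ (b-1)
      = Real.Gamma a * Real.Gamma b / Real.Gamma (a+b) := by
  have key := Complex.Gamma_mul_Gamma_eq_betaIntegral
    (s := (a:ℂ)) (t := (b:ℂ)) (by simpa using ha) (by simpa using hb)
  have hBeta : Complex.betaIntegral a b
      = ((∫ t in (0:ℝ)..1, t ^ (a-1) * (1-t) ^ (b-1) : ℝ) : ℂ) := by
    rw [Complex.betaIntegral]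
    rw [show (∫ t in (0:ℝ)..1, (t:ℂ) ^ ((a:ℂ)-1) * ((1:ℂ)-t) ^ ((b:ℂ)-1))
        = ∫ t in (0:ℝ)..1, ((t ^ (a-1) * (1-t) ^ (b-1) : ℝ) : ℂ) from
      integral_congr fun t ht => ?_]
    · exact intervalIntegral.integral_ofReal
    rw [uIcc_of_le (by norm_num : (0:ℝ) ≤ 1)] at ht
    push_cast
    rw [Complex.ofReal_cpow ht.1, Complex.ofReal_cpow (by linarith [ht.2] : (0:ℝ) ≤ 1 - t)]
    push_cast
    ring
  rw [hBeta, show ((a:ℂ)+(b:ℂ)) = ((a+b:ℝ):ℂ) by push_cast; ring,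
    Complex.Gamma_ofReal, Complex.Gamma_ofReal, Complex.Gamma_ofReal] at key
  have hG : Real.Gamma (a+b) ≠ 0 := (Real.Gamma_pos_of_pos (by linarith)).ne'
  have : ((Real.Gamma a * Real.Gamma b : ℝ) : ℂ)
      = ((Real.Gamma (a+b) * ∫ t in (0:ℝ)..1, t ^ (a-1) * (1-t) ^ (b-1) : ℝ) : ℂ) := by
    exact_mod_cast key
  have := Complex.ofReal_injective this
  field_simp
  linarith [this]


open MeasureTheory intervalIntegral Set

section moments
variable (n k : ℕ)

private noncomputable def Wf (n k : ℕ) : ℝ → ℝ :=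
  fun s => s^(2*k) * (1-s^2) ^ ((n:ℝ) - 1/2)

lemma sq_image : (fun s : ℝ => s^2) '' Ioo 0 1 = Ioo 0 1 := by
  ext t
  constructor
  · rintro ⟨s, ⟨hs0, hs1⟩, rfl⟩
    simp only [mem_Ioo]
    exact ⟨by positivity, by nlinarith [mul_lt_mul'' hs1 hs1 hs0.le hs0.le]⟩
  · rintro ⟨ht0, ht1⟩
    exact ⟨Real.sqrt t, ⟨Real.sqrt_pos.mpr ht0,
      by rw [show (1:ℝ) = Real.sqrt 1 by simp]; exact Real.sqrt_lt_sqrt ht0.le ht1⟩, Real.sq_sqrt ht0.le⟩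

lemma sq_deriv : ∀ x ∈ Ioo (0:ℝ) 1, HasDerivWithinAt (fun s : ℝ => s^2) (2*x) (Ioo 0 1) x := by
  intro x _
  simpa using (hasDerivAt_pow 2 x).hasDerivWithinAt

lemma sq_inj : InjOn (fun s : ℝ => s^2) (Ioo 0 1) :=
  (pow_left_strictMonoOn₀ (two_ne_zero)).injOn.mono (fun x hx => le_of_lt hx.1)

lemma smul_eq_Wf : ∀ x ∈ Ioo (0:ℝ) 1,
    |2*x| • ((x^2) ^ ((k:ℝ)+1/2-1) * (1-x^2) ^ ((n:ℝ)+1/2-1)) = 2 * Wf n k x := by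
  intro x hx
  have hx0 : (0:ℝ) < x := hx.1
  have h1 : ((x^2) : ℝ) ^ ((k:ℝ)+1/2-1) = x ^ (2*(k:ℝ)-1) := by
    rw [← Real.rpow_natCast x 2, ← Real.rpow_mul hx0.le]
    norm_num
    ring_nf
  have h2 : x ^ (2*(k:ℝ)-1) * x = x ^ (2*k : ℕ) := by
    nth_rewrite 2 [← Real.rpow_one x]
    rw [← Real.rpow_add hx0, ← Real.rpow_natCast x (2*k)]
    push_cast
    ring_nf
  rw [abs_of_pos (by linarith), smul_eq_mul, Wf]
  have hn : ((n:ℝ)+1/2-1) = ((n:ℝ)-1/2) := by ring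
  rw [hn, h1, ← h2]
  ring

lemma Wf_integrableOn_Ioo : IntegrableOn (Wf n k) (Ioo (0:ℝ) 1) := by
  have ha : (0:ℝ) < (k:ℝ)+1/2 := by positivity
  have hb : (0:ℝ) < (n:ℝ)+1/2 := by positivity
  have hc := Complex.betaIntegral_convergent
      (u := (((k:ℝ)+1/2 : ℝ):ℂ)) (v := (((n:ℝ)+1/2 : ℝ):ℂ))
      (by simpa using ha) (by simpa using hb)
  have hIoo : IntegrableOn
      (fun t : ℝ => (t:ℂ) ^ ((((k:ℝ)+1/2:ℝ):ℂ) - 1) * ((1:ℂ) - t) ^ ((((n:ℝ)+1/2:ℝ):ℂ) - 1))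
      (Ioo (0:ℝ) 1) :=
    ((intervalIntegrable_iff_integrableOn_Ioc_of_le zero_le_one).mp hc).mono_set
      Ioo_subset_Ioc_self
  have hre : IntegrableOn (fun t : ℝ => t ^ ((k:ℝ)+1/2-1) * (1-t) ^ ((n:ℝ)+1/2-1))
      (Ioo (0:ℝ) 1) := by
    refine IntegrableOn.congr_fun hIoo.re (fun t ht => ?_) measurableSet_Ioo
    have h1 : ((0:ℝ)) ≤ t := ht.1.le
    have h2 : (0:ℝ) ≤ 1 - t := by linarith [ht.2]
    rw [show ((((k:ℝ)+1/2:ℝ):ℂ) - 1) = (((k:ℝ)+1/2-1 : ℝ):ℂ) by push_cast; ring,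
      show ((((n:ℝ)+1/2:ℝ):ℂ) - 1) = (((n:ℝ)+1/2-1 : ℝ):ℂ) by push_cast; ring,
      ← Complex.ofReal_cpow h1, show ((1:ℂ) - (t:ℂ)) = ((1 - t : ℝ):ℂ) by push_cast; ring,
      ← Complex.ofReal_cpow h2, ← Complex.ofReal_mul]
    simp
  have key := (integrableOn_image_iff_integrableOn_abs_deriv_smul measurableSet_Ioo
    (sq_deriv) (sq_inj)
    (fun t : ℝ => t ^ ((k:ℝ)+1/2-1) * (1-t) ^ ((n:ℝ)+1/2-1))).mp (by rwa [sq_image])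
  have : IntegrableOn (fun x : ℝ => 2 * Wf n k x) (Ioo (0:ℝ) 1) :=
    IntegrableOn.congr_fun key (fun x hx => smul_eq_Wf n k x hx) measurableSet_Ioo
  have h2 := this.const_mul (1/2 : ℝ)
  refine IntegrableOn.congr_fun h2 (fun x _ => by ring) measurableSet_Ioo

lemma Wf_intInt : IntervalIntegrable (Wf n k) volume (-1) 1 := by
  have h01 : IntervalIntegrable (Wf n k) volume 0 1 := by
    rw [intervalIntegrable_iff_integrableOn_Ioo_of_le zero_le_one]
    exact Wf_integrableOn_Ioo n k
  have hneg : IntervalIntegrable (Wf n k) volume (-1) 0 := by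
    have := ((IntervalIntegrable.iff_comp_neg (by simp)).mp h01)
    have heq : (fun x => Wf n k (-x)) = Wf n k := by
      funext x; simp [Wf, neg_pow, pow_mul]
    rw [heq] at this
    simpa using this.symm
  exact hneg.trans h01

lemma Wf_intInt01 : IntervalIntegrable (Wf n k) volume 0 1 := by
  rw [intervalIntegrable_iff_integrableOn_Ioo_of_le zero_le_one]
  exact Wf_integrableOn_Ioo n k

lemma Wf_even : ∀ x : ℝ, Wf n k (-x) = Wf n k x := by
  intro x; simp [Wf, neg_pow, pow_mul]

lemma Wf_intIntneg : IntervalIntegrable (Wf n k) volume (-1) 0 := by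
  have := ((IntervalIntegrable.iff_comp_neg (by simp)).mp (Wf_intInt01 n k))
  rw [show (fun x => Wf n k (-x)) = Wf n k from funext (Wf_even n k)] at this
  simpa using this.symm

lemma moment_even :
    ∫ s in (-1:ℝ)..1, s^(2*k) * (1-s^2) ^ ((n:ℝ) - 1/2)
      = Real.Gamma ((k:ℝ)+1/2) * Real.Gamma ((n:ℝ)+1/2) / Real.Gamma ((k:ℝ)+(n:ℝ)+1) := by
  have hsum := integral_add_adjacent_intervals (Wf_intIntneg n k) (Wf_intInt01 n k)
  have hrefl : ∫ s in (-1:ℝ)..0, Wf n k s = ∫ s in (0:ℝ)..1, Wf n k s := by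
    have h := integral_comp_neg (a := (0:ℝ)) (b := 1) (f := Wf n k)
    simp only [neg_zero] at h
    rw [← h]
    exact integral_congr fun x _ => Wf_even n k x
  have himg := integral_image_eq_integral_abs_deriv_smul measurableSet_Ioo
    (sq_deriv) (sq_inj)
    (fun t : ℝ => t ^ ((k:ℝ)+1/2-1) * (1-t) ^ ((n:ℝ)+1/2-1))
  rw [sq_image] at himg
  have hs2 : ∫ x in Ioo (0:ℝ) 1,
      |2*x| • ((x^2) ^ ((k:ℝ)+1/2-1) * (1-x^2) ^ ((n:ℝ)+1/2-1))
      = ∫ x in Ioo (0:ℝ) 1, 2 * Wf n k x :=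
    setIntegral_congr_fun measurableSet_Ioo (fun x hx => smul_eq_Wf n k x hx)
  have hbeta := realBeta (a := (k:ℝ)+1/2) (b := (n:ℝ)+1/2) (by positivity) (by positivity)
  have hIoc : ∫ t in (0:ℝ)..1, t ^ ((k:ℝ)+1/2-1) * (1-t) ^ ((n:ℝ)+1/2-1)
      = ∫ t in Ioo (0:ℝ) 1, t ^ ((k:ℝ)+1/2-1) * (1-t) ^ ((n:ℝ)+1/2-1) := by
    rw [integral_of_le zero_le_one, integral_Ioc_eq_integral_Ioo]
  have hW01 : ∫ s in (0:ℝ)..1, Wf n k s = ∫ s in Ioo (0:ℝ) 1, Wf n k s := by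
    rw [integral_of_le zero_le_one, integral_Ioc_eq_integral_Ioo]
  have e1 : ∫ s in (-1:ℝ)..1, Wf n k s
      = Real.Gamma ((k:ℝ)+1/2) * Real.Gamma ((n:ℝ)+1/2) / Real.Gamma ((k:ℝ)+(n:ℝ)+1) := by
    rw [← hsum, hrefl, hW01]
    have : (2:ℝ) * ∫ s in Ioo (0:ℝ) 1, Wf n k s
        = Real.Gamma ((k:ℝ)+1/2) * Real.Gamma ((n:ℝ)+1/2) / Real.Gamma ((k:ℝ)+(n:ℝ)+1) := by
      rw [← MeasureTheory.integral_const_mul, ← hs2, ← himg, ← hIoc, hbeta]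
      norm_num
      ring_nf
    linarith [this]
  exact e1

end moments

lemma moment_odd (n m : ℕ) (hm : Odd m) :
    ∫ s in (-1:ℝ)..1, s^m * (1-s^2) ^ ((n:ℝ) - 1/2) = 0 := by
  have h := integral_comp_neg (a := (-1:ℝ)) (b := 1)
    (f := fun s => s^m * (1-s^2) ^ ((n:ℝ) - 1/2))
  simp only [neg_neg] at h
  have heq : ∀ x ∈ uIcc (-1:ℝ) 1, (fun s : ℝ => (-s)^m * (1-(-s)^2) ^ ((n:ℝ) - 1/2)) x
      = (fun s : ℝ => -(s^m * (1-s^2) ^ ((n:ℝ) - 1/2))) x := by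
    intro x _
    simp only [hm.neg_pow, neg_sq]
    ring
  rw [integral_congr heq, intervalIntegral.integral_neg] at h
  linarith


set_option maxHeartbeats 1000000 in
/-- The second deformed Bessel function, defined by the deformed Poisson integral,
has the stated Taylor expansion. -/
theorem J2mu_poisson (μ : ℝ) (hμ : 0 ≤ μ) (n : ℕ) (x : ℝ) :
    (((x / 2) ^ n / (Real.Gamma (1 / 2) * Real.Gamma ((n : ℝ) + 1 / 2)) : ℝ) : ℂ) *
        ∫ s in (-1 : ℝ)..1, EmuC μ (Complex.I * s * x) * (((1 - s ^ 2) ^ ((n : ℝ) - 1 / 2) : ℝ) : ℂ) =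
      ((∑' k : ℕ, (-1 : ℝ) ^ k * (Nat.factorial (2 * k)) /
          ((Nat.factorial k) * (Nat.factorial (k + n)) * dFact μ (2 * k)) *
        (x / 2) ^ (2 * k + n) : ℝ) : ℂ) := by
  set w : ℝ → ℝ := fun s => (1 - s ^ 2) ^ ((n : ℝ) - 1 / 2) with hw_def
  set F : ℕ → ℝ → ℂ :=
    fun m s => (Complex.I * s * x) ^ m / (dFact μ m : ℂ) * ((w s : ℝ) : ℂ) with hF_def
  have hd := dFact_pos hμ
  have hw_meas : Measurable w := by
    apply Measurable.pow <;> measurability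
  have hw_int : IntegrableOn w (Ioc (-1:ℝ) 1) volume :=
    (Wf_intInt n 0).1.congr_fun (fun s _ => by simp [Wf, hw_def]) measurableSet_Ioc
  have hw_nonneg : ∀ s ∈ Ioc (-1:ℝ) 1, 0 ≤ w s := fun s hs =>
    Real.rpow_nonneg (by nlinarith [hs.1, hs.2] : (0:ℝ) ≤ 1 - s^2) _
  have hFmeas : ∀ m, AEStronglyMeasurable (F m) (volume.restrict (Ioc (-1:ℝ) 1)) := by
    intro m
    apply AEStronglyMeasurable.mul
    · exact ((by fun_prop : Continuous fun s : ℝ =>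
        (Complex.I * s * x) ^ m / (dFact μ m : ℂ))).aestronglyMeasurable
    · exact (Complex.measurable_ofReal.comp hw_meas).aestronglyMeasurable
  have hbound : ∀ m, ∀ s ∈ Ioc (-1:ℝ) 1,
      ‖F m s‖ ≤ |x| ^ m / (Nat.factorial m : ℝ) * w s := by
    intro m s hs
    have hws := hw_nonneg s hs
    have hs1 : |s| ≤ 1 := abs_le.mpr ⟨hs.1.le, hs.2⟩
    have h1 : ‖(Complex.I * s * x) ^ m‖ ≤ |x| ^ m := by
      rw [norm_pow, norm_mul, norm_mul, Complex.norm_I, one_mul, Complex.norm_real,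
        Complex.norm_real]
      calc (‖s‖ * ‖x‖) ^ m ≤ (1 * ‖x‖) ^ m := by
            apply pow_le_pow_left₀ (by positivity)
            exact mul_le_mul_of_nonneg_right hs1 (norm_nonneg _)
        _ = |x| ^ m := by rw [one_mul]; rfl
    have hf : (0:ℝ) < (Nat.factorial m : ℝ) := by exact_mod_cast Nat.factorial_pos m
    have e1 : ‖((dFact μ m : ℝ):ℂ)‖ = dFact μ m := by
      rw [Complex.norm_real, Real.norm_of_nonneg (hd m).le]
    have e2 : ‖((w s : ℝ):ℂ)‖ = w s := by
      rw [Complex.norm_real, Real.norm_of_nonneg hws]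
    rw [norm_mul, norm_div, e1, e2]
    apply mul_le_mul_of_nonneg_right _ hws
    exact div_le_div₀ (by positivity) h1 hf (factorial_le_dFact hμ m)
  have hF_int : ∀ m, Integrable (F m) (volume.restrict (Ioc (-1:ℝ) 1)) := by
    intro m
    refine Integrable.mono (g := fun s => |x| ^ m / (Nat.factorial m : ℝ) * w s)
      (hw_int.const_mul _) (hFmeas m) ?_
    rw [ae_restrict_iff' measurableSet_Ioc]
    filter_upwards with s hs
    refine (hbound m s hs).trans ?_
    rw [Real.norm_of_nonneg (mul_nonneg (by positivity) (hw_nonneg s hs))]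
  have hF_norm_sum : Summable (fun m => ∫ s in Ioc (-1:ℝ) 1, ‖F m s‖) := by
    refine Summable.of_nonneg_of_le (fun m => integral_nonneg fun s => norm_nonneg _)
      (fun m => ?_) (((Real.summable_pow_div_factorial |x|).mul_right
        (∫ s in Ioc (-1:ℝ) 1, w s)))
    calc (∫ s in Ioc (-1:ℝ) 1, ‖F m s‖)
        ≤ ∫ s in Ioc (-1:ℝ) 1, |x| ^ m / (Nat.factorial m : ℝ) * w s := by
          refine integral_mono_ae (hF_int m).norm (hw_int.const_mul _) ?_
          filter_upwards [ae_restrict_mem measurableSet_Ioc] with s hs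
          exact hbound m s hs
      _ = |x| ^ m / (Nat.factorial m : ℝ) * ∫ s in Ioc (-1:ℝ) 1, w s :=
          MeasureTheory.integral_const_mul _ _
  have hkey : ∑' m, (∫ s in Ioc (-1:ℝ) 1, F m s) = ∫ s in Ioc (-1:ℝ) 1, (∑' m, F m s) :=
    integral_tsum_of_summable_integral_norm hF_int hF_norm_sum
  have hS : Summable (fun m => ∫ s in Ioc (-1:ℝ) 1, F m s) :=
    Summable.of_norm_bounded hF_norm_sum fun m => norm_integral_le_integral_norm _
  have hint_m : ∀ m, (∫ s in Ioc (-1:ℝ) 1, F m s)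
      = (Complex.I * x) ^ m / (dFact μ m : ℂ) *
        (((∫ s in (-1:ℝ)..1, s ^ m * w s) : ℝ) : ℂ) := by
    intro m
    calc (∫ s in Ioc (-1:ℝ) 1, F m s)
        = ∫ s in Ioc (-1:ℝ) 1, (Complex.I * x) ^ m / (dFact μ m : ℂ) *
            ((s ^ m * w s : ℝ) : ℂ) := by
          refine setIntegral_congr_fun measurableSet_Ioc (fun s _ => ?_)
          simp only [hF_def]
          push_cast
          ring
      _ = (Complex.I * x) ^ m / (dFact μ m : ℂ) *
            ∫ s in Ioc (-1:ℝ) 1, ((s ^ m * w s : ℝ) : ℂ) := MeasureTheory.integral_const_mul _ _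
      _ = (Complex.I * x) ^ m / (dFact μ m : ℂ) *
            (((∫ s in Ioc (-1:ℝ) 1, s ^ m * w s) : ℝ) : ℂ) :=
            congrArg (fun z => (Complex.I * (x:ℂ)) ^ m / (dFact μ m : ℂ) * z)
              (_root_.integral_ofReal (𝕜 := ℂ))
      _ = (Complex.I * x) ^ m / (dFact μ m : ℂ) *
            (((∫ s in (-1:ℝ)..1, s ^ m * w s) : ℝ) : ℂ) := by
          rw [integral_of_le (by norm_num : (-1:ℝ) ≤ 1)]
  set Cr : ℝ := (x / 2) ^ n / (Real.Gamma (1 / 2) * Real.Gamma ((n : ℝ) + 1 / 2)) with hCr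
  set T : ℕ → ℂ := fun m => (Complex.I * x) ^ m / (dFact μ m : ℂ) *
      (((∫ s in (-1:ℝ)..1, s ^ m * w s) : ℝ) : ℂ) with hT
  set c : ℕ → ℝ := fun k => (-1 : ℝ) ^ k * (Nat.factorial (2 * k)) /
      ((Nat.factorial k) * (Nat.factorial (k + n)) * dFact μ (2 * k)) *
      (x / 2) ^ (2 * k + n) with hc
  have hIx : ∀ k : ℕ, (Complex.I * (x:ℂ)) ^ (2*k) = (((-1:ℝ)^k * x^(2*k) : ℝ) : ℂ) := by
    intro k
    rw [mul_pow, pow_mul, Complex.I_sq]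
    push_cast
    ring
  have hGpos1 : (0:ℝ) < Real.Gamma (1/2) := Real.Gamma_pos_of_pos (by norm_num)
  have hGpos2 : (0:ℝ) < Real.Gamma ((n:ℝ)+1/2) := Real.Gamma_pos_of_pos (by positivity)
  have heven : ∀ k : ℕ, (Cr : ℂ) * T (2*k) = ((c k : ℝ) : ℂ) := by
    intro k
    have hM : (∫ s in (-1:ℝ)..1, s ^ (2*k) * w s)
        = Real.Gamma ((k:ℝ)+1/2) * Real.Gamma ((n:ℝ)+1/2) / Real.Gamma ((k:ℝ)+(n:ℝ)+1) := by
      simp only [hw_def]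
      exact moment_even n k
    simp only [hT]
    rw [hM, hIx k]
    have hreal : Cr * ((-1:ℝ)^k * x^(2*k) / dFact μ (2*k) *
        (Real.Gamma ((k:ℝ)+1/2) * Real.Gamma ((n:ℝ)+1/2) / Real.Gamma ((k:ℝ)+(n:ℝ)+1)))
        = c k := by
      rw [hCr, hc, Gamma_nat_add_half k,
        show ((k:ℝ)+(n:ℝ)+1) = (((k+n:ℕ)):ℝ)+1 by push_cast; ring,
        Real.Gamma_nat_eq_factorial]
      have h4 : (4:ℝ)^k = 2^(2*k) := by
        rw [show (4:ℝ) = 2^2 by norm_num, ← pow_mul]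
      have hf1 : (0:ℝ) < (Nat.factorial k : ℝ) := by exact_mod_cast Nat.factorial_pos k
      have hf2 : (0:ℝ) < (Nat.factorial (k+n) : ℝ) := by exact_mod_cast Nat.factorial_pos (k+n)
      have hdk := hd (2*k)
      simp only [div_pow]
      rw [h4]
      field_simp
      ring
    rw [← hreal]
    push_cast
    ring
  have hodd0 : ∀ k : ℕ, (Cr : ℂ) * T (2*k+1) = 0 := by
    intro k
    have hM : (∫ s in (-1:ℝ)..1, s ^ (2*k+1) * w s) = 0 := by
      simp only [hw_def]
      exact moment_odd n (2*k+1) ⟨k, by ring⟩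
    simp only [hT]
    rw [hM]
    simp
  have hinteg : (∫ s in (-1:ℝ)..1, EmuC μ (Complex.I * s * x) * ((w s : ℝ) : ℂ))
      = ∫ s in Ioc (-1:ℝ) 1, (∑' m, F m s) := by
    rw [integral_of_le (by norm_num : (-1:ℝ) ≤ 1)]
    refine setIntegral_congr_fun measurableSet_Ioc (fun s _ => ?_)
    rw [EmuC]
    exact tsum_mul_right.symm
  have hST : Summable T := hS.congr hint_m
  have hSCT : Summable (fun m => (Cr : ℂ) * T m) := hST.mul_left _
  have h2inj : Function.Injective (fun k : ℕ => 2*k) := fun a b h => by dsimp at h; omega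
  have h2inj' : Function.Injective (fun k : ℕ => 2*k+1) := fun a b h => by dsimp at h; omega
  have step1 : ((Cr : ℝ) : ℂ) * ∫ s in (-1:ℝ)..1, EmuC μ (Complex.I * s * x) * ((w s : ℝ) : ℂ)
      = (Cr : ℂ) * ∑' m, T m := by
    rw [hinteg, ← hkey, tsum_congr hint_m]
  rw [step1]
  clear step1 hF_int hFmeas hbound hF_norm_sum hkey hS hint_m hw_int hw_meas hw_nonneg
    hIx hinteg hGpos1 hGpos2 hd
  clear_value T c
  clear hc hT hF_def hw_def hCr F w
  have hev : Summable (fun k : ℕ => (Cr : ℂ) * T (2*k)) := hSCT.comp_injective h2inj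
  have hod : Summable (fun k : ℕ => (Cr : ℂ) * T (2*k+1)) := hSCT.comp_injective h2inj'
  rw [← tsum_mul_left, ← tsum_even_add_odd hev hod, tsum_congr hodd0, tsum_zero, add_zero,
    tsum_congr heven, ← Complex.ofReal_tsum]
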